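/- Let G be a finite solvable group. Then m(G) equals the number of non-Frattini chief factors in a chief series of G. -/

import Mathlib

def IndepGen {G : Type*} [Group G] (S : Set G) : Prop :=
  Subgroup.closure S = ⊤ ∧ ∀ s ∈ S, Subgroup.closure (S \ {s}) < ⊤

noncomputable def mGen (G : Type*) [Group G] : ℕ :=
  sSup {n | ∃ S : Finset G, IndepGen (S : Set G) ∧ S.card = n}

/-- A chief factor `X/Y` (with `Y ≤ X` normal subgroups of `G`) is Frattini iff
`X/Y ≤ Frat(G/Y)`, equivalently `X` is contained in every maximal subgroup of `G`
containing `Y`. -/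
def IsFrattiniFactor {G : Type*} [Group G] (Y X : Subgroup G) : Prop :=
  ∀ M : Subgroup G, IsCoatom M → Y ≤ M → X ≤ M

open Subgroup

section Base
variable {G : Type*} [Group G]

lemma mGen_bddAbove [Finite G] :
    BddAbove {n | ∃ S : Finset G, IndepGen (S : Set G) ∧ S.card = n} := by
  have : Fintype G := Fintype.ofFinite G
  exact ⟨Fintype.card G, by rintro n ⟨S, -, rfl⟩; exact Finset.card_le_univ S⟩

lemma le_mGen [Finite G] {S : Finset G} (h : IndepGen (S : Set G)) : S.card ≤ mGen G :=
  le_csSup mGen_bddAbove ⟨S, h, rfl⟩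

lemma mGen_le {k : ℕ} (h : ∀ S : Finset G, IndepGen (S : Set G) → S.card ≤ k) :
    mGen G ≤ k := by
  apply csSup_le'
  rintro n ⟨S, hS, rfl⟩
  exact h S hS

private lemma exists_indep_aux [Finite G] :
    ∀ n (S : Finset G), S.card ≤ n → Subgroup.closure (S : Set G) = ⊤ →
      ∃ T : Finset G, IndepGen (T : Set G) := by
  classical
  intro n
  induction n with
  | zero =>
    intro S hc hS
    exact ⟨S, hS, fun s hs => absurd (Finset.card_eq_zero.mp (Nat.le_zero.mp hc) ▸ hs)
      (by simp)⟩
  | succ n ih =>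
    intro S hc hS
    by_cases hind : ∀ s ∈ (S : Set G), Subgroup.closure ((S : Set G) \ {s}) < ⊤
    · exact ⟨S, hS, hind⟩
    · push_neg at hind
      obtain ⟨s, hsS, hstop⟩ := hind
      have htop : Subgroup.closure ((S.erase s : Finset G) : Set G) = ⊤ := by
        rw [Finset.coe_erase]
        exact (lt_or_eq_of_le le_top).resolve_left hstop
      have hsS' : s ∈ S := by exact_mod_cast hsS
      exact ih (S.erase s) (by
        have := Finset.card_erase_lt_of_mem hsS'
        omega) htop

lemma exists_indepGen (G : Type*) [Group G] [Finite G] :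
    ∃ S : Finset G, IndepGen (S : Set G) := by
  classical
  have : Fintype G := Fintype.ofFinite G
  exact exists_indep_aux Finset.univ.card Finset.univ le_rfl (by simp)

lemma exists_indepGen_card_mGen (G : Type*) [Group G] [Finite G] :
    ∃ S : Finset G, IndepGen (S : Set G) ∧ S.card = mGen G := by
  have hne : {n | ∃ S : Finset G, IndepGen (S : Set G) ∧ S.card = n}.Nonempty := by
    obtain ⟨S, hS⟩ := exists_indepGen G
    exact ⟨S.card, S, hS, rfl⟩
  exact Nat.sSup_mem hne mGen_bddAbove

lemma mGen_eq_zero_of_subsingleton (G : Type*) [Group G] [Subsingleton G] : mGen G = 0 := by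
  refine Nat.le_zero.mp (mGen_le fun S hS => ?_)
  rcases Finset.eq_empty_or_nonempty S with rfl | ⟨s, hs⟩
  · simp
  · exact absurd (hS.2 s (by exact_mod_cast hs)).ne (by simp [Subsingleton.elim _ (⊤ : Subgroup G)])

end Base

section Quot
variable {G : Type*} [Group G] (N : Subgroup G) [N.Normal]


local notation "π" => QuotientGroup.mk' N

lemma map_mk'_eq_bot : Subgroup.map π N = ⊥ :=
  (Subgroup.map_eq_bot_iff _).mpr (by rw [QuotientGroup.ker_mk'])

lemma map_eq_top_iff' (K : Subgroup G) : Subgroup.map π K = ⊤ ↔ K ⊔ N = ⊤ := by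
  constructor
  · intro h
    have := congrArg (Subgroup.comap π) h
    rw [Subgroup.comap_map_eq, QuotientGroup.ker_mk', Subgroup.comap_top] at this
    exact this
  · intro h
    have : Subgroup.map π (K ⊔ N) = ⊤ := by
      rw [h]; exact Subgroup.map_top_of_surjective _ (QuotientGroup.mk'_surjective N)
    rwa [Subgroup.map_sup, map_mk'_eq_bot, sup_bot_eq] at this

/-- Core: push an "independent mod N" finset down to the quotient. -/
lemma image_indepGen [DecidableEq (G ⧸ N)] (T : Finset G)
    (hgen : Subgroup.closure (T : Set G) ⊔ N = ⊤)
    (hind : ∀ t ∈ T, Subgroup.closure ((T : Set G) \ {t}) ⊔ N ≠ ⊤) :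
    IndepGen ((T.image π : Finset (G ⧸ N)) : Set (G ⧸ N)) ∧ (T.image π).card = T.card := by
  have hinj : Set.InjOn π (T : Set G) := by
    intro a ha b hb hab
    by_contra hne
    apply hind a ha
    rw [← map_eq_top_iff']
    rw [eq_top_iff]
    calc (⊤ : Subgroup (G ⧸ N)) = Subgroup.map π (Subgroup.closure (T : Set G) ⊔ N) := by
          rw [hgen]; exact (Subgroup.map_top_of_surjective _ (QuotientGroup.mk'_surjective N)).symm
      _ = Subgroup.map π (Subgroup.closure (T : Set G)) := by
          rw [Subgroup.map_sup, map_mk'_eq_bot, sup_bot_eq]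
      _ = Subgroup.closure (π '' (T : Set G)) := MonoidHom.map_closure _ _
      _ ≤ Subgroup.closure (π '' ((T : Set G) \ {a})) := by
          apply Subgroup.closure_mono
          rintro x ⟨u, hu, rfl⟩
          by_cases hua : u = a
          · exact ⟨b, ⟨hb, fun hba => hne (Set.mem_singleton_iff.mp hba).symm⟩, by rw [hua, hab]⟩
          · exact ⟨u, ⟨hu, hua⟩, rfl⟩
      _ = Subgroup.map π (Subgroup.closure ((T : Set G) \ {a})) :=
          (MonoidHom.map_closure _ _).symm
  have himg : (π '' (T : Set G)) = ((T.image π : Finset (G ⧸ N)) : Set (G ⧸ N)) := by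
    simp [Finset.coe_image]
  constructor
  · constructor
    · rw [← himg, ← MonoidHom.map_closure, map_eq_top_iff']
      exact hgen
    · intro t' ht'
      rw [← himg] at ht'
      obtain ⟨t, ht, rfl⟩ := ht'
      have hsub : ((T.image π : Finset (G ⧸ N)) : Set (G ⧸ N)) \ {π t}
          ⊆ π '' ((T : Set G) \ {t}) := by
        rintro x ⟨hx, hxt⟩
        rw [← himg] at hx
        obtain ⟨u, hu, rfl⟩ := hx
        exact ⟨u, ⟨hu, fun h => hxt (h ▸ rfl)⟩, rfl⟩
      have : Subgroup.closure (((T.image π : Finset (G ⧸ N)) : Set (G ⧸ N)) \ {π t})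
          ≤ Subgroup.map π (Subgroup.closure ((T : Set G) \ {t})) :=
        (Subgroup.closure_mono hsub).trans (le_of_eq (MonoidHom.map_closure _ _).symm)
      exact lt_of_le_of_lt this (lt_top_iff_ne_top.mpr
        (fun h => hind t ht ((map_eq_top_iff' N _).mp h)))
  · exact Finset.card_image_of_injOn hinj

end Quot

section LemmaA
variable {G : Type*} [Group G] [Finite G] (N : Subgroup G) [N.Normal]

local notation "π" => QuotientGroup.mk' N

omit [N.Normal] in
lemma sup_frattini_absorb (hN : N ≤ frattini G) {K : Subgroup G} (h : K ⊔ N = ⊤) :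
    K = ⊤ := by
  apply frattini_nongenerating
  exact eq_top_iff.mpr (h ▸ sup_le_sup_left hN K)

lemma mGen_quotient_frattini (hN : N ≤ frattini G) : mGen G = mGen (G ⧸ N) := by
  classical
  apply le_antisymm
  · apply mGen_le
    intro S hS
    obtain ⟨hi, hc⟩ := image_indepGen N S (by rw [hS.1]; exact top_sup_eq N)
      (fun t ht h => (hS.2 t ht).ne (sup_frattini_absorb N hN h))
    exact hc ▸ le_mGen hi
  · obtain ⟨T, hT, hTc⟩ := exists_indepGen_card_mGen (G ⧸ N)
    rw [← hTc]
    set f := Function.surjInv (QuotientGroup.mk'_surjective N) with hf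
    have hpf : ∀ t, π (f t) = t := Function.surjInv_eq (QuotientGroup.mk'_surjective N)
    have hfinj : Function.Injective f := fun a b h => by rw [← hpf a, ← hpf b, h]
    set S := T.image f with hSdef
    have hcard : S.card = T.card := Finset.card_image_of_injective T hfinj
    have himg : π '' (S : Set G) = (T : Set (G ⧸ N)) := by
      rw [hSdef, Finset.coe_image, ← Set.image_comp]
      have : (π : G → G ⧸ N) ∘ f = id := funext hpf
      rw [this, Set.image_id]
    rw [← hcard]
    apply le_mGen
    constructor
    · apply sup_frattini_absorb N hN
      rw [← map_eq_top_iff']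
      rw [MonoidHom.map_closure, himg, hT.1]
    · intro s hs
      obtain ⟨t, ht, rfl⟩ : ∃ t ∈ T, f t = s := by
        rw [hSdef] at hs
        simpa using hs
      rw [lt_top_iff_ne_top]
      intro h
      have h2 : Subgroup.map π (Subgroup.closure ((S : Set G) \ {f t})) = ⊤ := by
        rw [h]; exact Subgroup.map_top_of_surjective _ (QuotientGroup.mk'_surjective N)
      rw [MonoidHom.map_closure] at h2
      have hsub : π '' ((S : Set G) \ {f t}) ⊆ (T : Set (G ⧸ N)) \ {t} := by
        rintro x ⟨u, ⟨hu, hut⟩, rfl⟩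
        obtain ⟨v, hv, rfl⟩ : ∃ v ∈ T, f v = u := by
          rw [hSdef] at hu; simpa using hu
        rw [hpf]
        refine ⟨by exact_mod_cast hv, fun hvt => hut ?_⟩
        rw [Set.mem_singleton_iff] at hvt ⊢
        rw [hvt]
      have := (Subgroup.closure_mono hsub)
      rw [h2] at this
      exact (hT.2 t ht).ne (top_unique this)

end LemmaA

section LemmaB
variable {G : Type*} [Group G] [Finite G] (N : Subgroup G) [N.Normal]

local notation "π" => QuotientGroup.mk' N

omit [Finite G] in
/-- If `N` is an abelian minimal normal subgroup and `H` a proper supplement, then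
`H ⊓ N = ⊥`. -/
lemma inf_eq_bot_of_supplement
    (hmin : ∀ K : Subgroup G, K.Normal → K ≤ N → K = ⊥ ∨ K = N)
    (hab : ∀ x ∈ N, ∀ y ∈ N, x * y = y * x)
    {H : Subgroup G} (hH : H ≠ ⊤) (hsup : H ⊔ N = ⊤) : H ⊓ N = ⊥ := by
  have hnormal : (H ⊓ N).Normal := by
    constructor
    intro x hx g
    have hg : g ∈ ((H ⊔ N : Subgroup G) : Set G) := by rw [hsup]; trivial
    rw [Subgroup.mul_normal] at hg
    obtain ⟨h, hh, n, hn, rfl⟩ := hg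
    have hxN : x ∈ N := hx.2
    have hnx : n * x * n⁻¹ = x := by
      rw [hab n hn x hxN]; group
    have : h * n * x * (h * n)⁻¹ = h * (n * x * n⁻¹) * h⁻¹ := by group
    rw [this, hnx]
    exact ⟨H.mul_mem (H.mul_mem hh hx.1) (H.inv_mem hh),
      Subgroup.Normal.conj_mem ‹N.Normal› x hxN h⟩
  rcases hmin (H ⊓ N) hnormal inf_le_right with h | h
  · exact h
  · exfalso
    apply hH
    have hNH : N ≤ H := h ▸ inf_le_left
    rw [← hsup, sup_eq_left.mpr hNH]

omit [Finite G] in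
/-- Dedekind-style: a subgroup of a complement that still supplements is everything. -/
lemma eq_of_le_supplement {H K : Subgroup G} (hKH : K ≤ H) (hHN : H ⊓ N = ⊥)
    (hKN : K ⊔ N = ⊤) : K = H := by
  refine le_antisymm hKH fun x hx => ?_
  have hx' : x ∈ ((K ⊔ N : Subgroup G) : Set G) := by rw [hKN]; trivial
  rw [Subgroup.mul_normal] at hx'
  obtain ⟨k, hk, n, hn, rfl⟩ := hx'
  have hnHN : n ∈ H ⊓ N := ⟨(mul_mem_cancel_left (hKH hk)).mp hx, hn⟩
  rw [hHN] at hnHN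
  obtain rfl : n = 1 := Subgroup.mem_bot.mp hnHN
  simpa using hk

lemma mGen_le_quotient_succ
    (hmin : ∀ K : Subgroup G, K.Normal → K ≤ N → K = ⊥ ∨ K = N)
    (hab : ∀ x ∈ N, ∀ y ∈ N, x * y = y * x) :
    mGen G ≤ mGen (G ⧸ N) + 1 := by
  classical
  apply mGen_le
  intro S hS
  by_cases hex : ∃ s ∈ S, Subgroup.closure ((S : Set G) \ {s}) ⊔ N = ⊤
  · obtain ⟨s₀, hs₀, hsup⟩ := hex
    set H := Subgroup.closure ((S : Set G) \ {s₀}) with hH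
    have hHne : H ≠ ⊤ := (hS.2 s₀ hs₀).ne
    have hHinf : H ⊓ N = ⊥ := inf_eq_bot_of_supplement N hmin hab hHne hsup
    set T := S.erase s₀ with hT
    have hTS : (T : Set G) = (S : Set G) \ {s₀} := Finset.coe_erase s₀ S
    have hind : ∀ t ∈ T, Subgroup.closure ((T : Set G) \ {t}) ⊔ N ≠ ⊤ := by
      intro t ht hKN
      have htS : t ∈ S := Finset.mem_of_mem_erase ht
      have hts₀ : t ≠ s₀ := Finset.ne_of_mem_erase ht
      set K := Subgroup.closure ((T : Set G) \ {t}) with hK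
      have hKH : K ≤ H := Subgroup.closure_mono (by
        rw [hTS]; exact fun x hx => hx.1)
      have hKeq : K = H := eq_of_le_supplement N hKH hHinf hKN
      -- now closure (S \ {t}) contains everything
      apply (hS.2 t htS).ne
      have hsub : (S : Set G) ⊆ (Subgroup.closure ((S : Set G) \ {t}) : Set G) := by
        intro u hu
        by_cases hut : u = t
        · subst hut
          have huH : u ∈ H :=
            Subgroup.subset_closure (show u ∈ (S : Set G) \ {s₀} from ⟨hu, hts₀⟩)
          rw [← hKeq] at huH
          refine Subgroup.closure_mono ?_ huH
          rw [hTS]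
          intro x hx
          exact show x ∈ (S : Set G) \ {u} from ⟨hx.1.1, hx.2⟩
        · exact Subgroup.subset_closure (show u ∈ (S : Set G) \ {t} from ⟨hu, hut⟩)
      have := (Subgroup.closure_le _).mpr hsub
      rw [hS.1] at this
      exact top_unique this
    have hgen : Subgroup.closure (T : Set G) ⊔ N = ⊤ := by rw [hTS]; exact hsup
    obtain ⟨hi, hc⟩ := image_indepGen N T hgen hind
    have hle : (T.image π).card ≤ mGen (G ⧸ N) := le_mGen hi
    rw [hc, hT] at hle
    rw [Finset.card_erase_of_mem hs₀] at hle
    have hpos : 1 ≤ S.card := Finset.card_pos.mpr ⟨s₀, hs₀⟩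
    omega
  · push_neg at hex
    obtain ⟨hi, hc⟩ := image_indepGen N S (by rw [hS.1]; exact top_sup_eq N) hex
    have := le_mGen hi
    rw [hc] at this
    omega

end LemmaB

section LemmaB2
variable {G : Type*} [Group G] [Finite G] (N : Subgroup G) [N.Normal]

local notation "π" => QuotientGroup.mk' N

lemma quotient_succ_le_mGen
    (hmin : ∀ K : Subgroup G, K.Normal → K ≤ N → K = ⊥ ∨ K = N)
    (hab : ∀ x ∈ N, ∀ y ∈ N, x * y = y * x)
    (hNbot : N ≠ ⊥)
    {M : Subgroup G} (hM : IsCoatom M) (hNM : ¬ N ≤ M) :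
    mGen (G ⧸ N) + 1 ≤ mGen G := by
  classical
  have hMN : M ⊔ N = ⊤ := by
    rcases lt_or_eq_of_le (le_sup_left : M ≤ M ⊔ N) with h | h
    · exact hM.2 _ h
    · exact absurd (sup_eq_left.mp h.symm) hNM
  have hMinf : M ⊓ N = ⊥ := inf_eq_bot_of_supplement N hmin hab hM.1 hMN
  obtain ⟨x, hxN, hx1⟩ : ∃ x ∈ N, x ≠ 1 := by
    by_contra h
    push_neg at h
    exact hNbot ((Subgroup.eq_bot_iff_forall N).mpr h)
  have hxM : x ∉ M := fun hxM => hx1 (Subgroup.mem_bot.mp (hMinf ▸ ⟨hxM, hxN⟩))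
  obtain ⟨T, hT, hTc⟩ := exists_indepGen_card_mGen (G ⧸ N)
  have hmapM : Subgroup.map π M = ⊤ := (map_eq_top_iff' N M).mpr hMN
  have hsur : ∀ t : G ⧸ N, ∃ y, y ∈ M ∧ π y = t := by
    intro t
    have ht : t ∈ Subgroup.map π M := hmapM ▸ Subgroup.mem_top t
    obtain ⟨y, hy, hyt⟩ := ht
    exact ⟨y, hy, hyt⟩
  choose g hgM hgπ using hsur
  have hginj : Function.Injective g := fun a b h => by rw [← hgπ a, ← hgπ b, h]
  have hpig : (π : G → G ⧸ N) ∘ g = id := funext hgπ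
  set S : Finset G := insert x (T.image g) with hS
  have hxnot : x ∉ T.image g := by
    intro hmem
    obtain ⟨t, -, rfl⟩ := Finset.mem_image.mp hmem
    exact hxM (hgM t)
  have hcard : S.card = T.card + 1 := by
    rw [hS, Finset.card_insert_of_notMem hxnot, Finset.card_image_of_injective T hginj]
  have himgT : π '' (g '' (T : Set (G ⧸ N))) = (T : Set (G ⧸ N)) := by
    rw [← Set.image_comp, hpig, Set.image_id]
  have hKM : Subgroup.closure (g '' (T : Set (G ⧸ N))) = M := by
    apply eq_of_le_supplement N _ hMinf
    · rw [← map_eq_top_iff']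
      rw [MonoidHom.map_closure, himgT, hT.1]
    · exact (Subgroup.closure_le _).mpr (by rintro y ⟨t, -, rfl⟩; exact hgM t)
  have hcoeS : (S : Set G) = insert x (g '' (T : Set (G ⧸ N))) := by
    rw [hS, Finset.coe_insert, Finset.coe_image]
  refine le_trans ?_ (le_mGen (S := S) ⟨?_, ?_⟩)
  · rw [hcard, hTc]
  · -- generation
    apply hM.2
    rw [lt_iff_le_and_ne]
    constructor
    · rw [← hKM]
      apply Subgroup.closure_mono
      rw [hcoeS]
      exact Set.subset_insert _ _
    · intro hMeq
      exact hxM (hMeq ▸ Subgroup.subset_closure (by rw [hcoeS]; exact Set.mem_insert _ _))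
  · -- independence
    intro s hs
    rw [hcoeS] at hs
    rcases hs with rfl | ⟨t, ht, rfl⟩
    · -- removing x
      have hsub : (S : Set G) \ {s} ⊆ g '' (T : Set (G ⧸ N)) := by
        rintro y ⟨hy, hys⟩
        rw [hcoeS] at hy
        rcases hy with rfl | hy
        · exact absurd rfl hys
        · exact hy
      calc Subgroup.closure ((S : Set G) \ {s}) ≤ M := hKM ▸ Subgroup.closure_mono hsub
        _ < ⊤ := hM.1.lt_top
    · -- removing g t
      set K' := Subgroup.closure (g '' ((T : Set (G ⧸ N)) \ {t})) with hK'
      have hK'N : K' ⊔ N ≠ ⊤ := by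
        intro h
        have : Subgroup.map π (K' ⊔ N) = ⊤ := by
          rw [h]; exact Subgroup.map_top_of_surjective _ (QuotientGroup.mk'_surjective N)
        rw [Subgroup.map_sup, map_mk'_eq_bot, sup_bot_eq, hK', MonoidHom.map_closure,
          ← Set.image_comp, hpig, Set.image_id] at this
        exact (hT.2 t ht).ne this
      have hsub : Subgroup.closure ((S : Set G) \ {g t}) ≤ K' ⊔ N := by
        apply (Subgroup.closure_le _).mpr
        rintro y ⟨hy, hyt⟩
        rw [hcoeS] at hy
        rcases hy with rfl | ⟨u, hu, rfl⟩
        · exact Subgroup.mem_sup_right hxN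
        · refine Subgroup.mem_sup_left (Subgroup.subset_closure ⟨u, ⟨hu, ?_⟩, rfl⟩)
          exact fun hut => hyt (by rw [Set.mem_singleton_iff.mp hut]; exact rfl)
      exact lt_of_le_of_lt hsub (lt_top_iff_ne_top.mpr hK'N)

end LemmaB2

section Abelian
variable {G : Type*} [Group G]
open commutatorElement

lemma abelian_of_min_normal [Group.IsSolvable G] (N : Subgroup G) [N.Normal]
    (hNbot : N ≠ ⊥)
    (hmin : ∀ K : Subgroup G, K.Normal → K ≤ N → K = ⊥ ∨ K = N) :
    ∀ x ∈ N, ∀ y ∈ N, x * y = y * x := by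
  have hC : (⁅N, N⁆ : Subgroup G).Normal := Subgroup.commutator_normal N N
  have hCle : (⁅N, N⁆ : Subgroup G) ≤ N := Subgroup.commutator_le_right N N
  rcases hmin ⁅N, N⁆ hC hCle with h | h
  · intro x hx y hy
    have : ⁅x, y⁆ ∈ (⁅N, N⁆ : Subgroup G) := commutator_mem_commutator hx hy
    rw [h, Subgroup.mem_bot, commutatorElement_def] at this
    have := mul_eq_one_iff_eq_inv.mp this
    calc x * y = (x * y * x⁻¹ * y⁻¹) * (y * x) := by group
      _ = y * x := by rw [← commutatorElement_def,
        show ⁅x,y⁆ = 1 from by rw [commutatorElement_def]; exact mul_eq_one_iff_eq_inv.mpr this ▸ rfl, one_mul]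
  · exfalso
    -- N is perfect, contradicting solvability
    have hle : ∀ n, N ≤ derivedSeries G n := by
      intro n
      induction n with
      | zero => exact le_top
      | succ n ih =>
        rw [derivedSeries_succ, ← h]
        exact commutator_mono ih ih
    obtain ⟨n, hn⟩ := Group.IsSolvable.solvable (G := G)
    exact hNbot (le_bot_iff.mp (hn ▸ hle n))

end Abelian

lemma card_subtype_fin_succ {n : ℕ} (p : Fin (n + 1) → Prop) [DecidablePred p] :
    Nat.card {i // p i} = (if p 0 then 1 else 0) + Nat.card {i : Fin n // p i.succ} := by
  classical
  rw [Nat.card_eq_fintype_card, Nat.card_eq_fintype_card, Fintype.card_subtype,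
    Fintype.card_subtype]
  rw [Fin.univ_succ, Finset.filter_cons]
  have hmap : (Finset.filter (fun x => p x)
      (Finset.map ⟨Fin.succ, Fin.succ_injective n⟩ Finset.univ)).card
      = (Finset.filter (fun x => p x.succ) (Finset.univ : Finset (Fin n))).card := by
    rw [Finset.filter_map, Finset.card_map]
    rfl
  split_ifs with h
  · rw [Finset.card_cons, hmap]; omega
  · rw [hmap]; omega

lemma le_frattini_iff {G : Type*} [Group G] (N : Subgroup G) :
    N ≤ frattini G ↔ ∀ M : Subgroup G, IsCoatom M → N ≤ M := by
  rw [frattini, Order.radical]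
  simp only [le_iInf_iff, Set.mem_setOf_eq]

section Correspondence
variable {G : Type*} [Group G] (N : Subgroup G) [N.Normal]

local notation "π" => QuotientGroup.mk' N

lemma comap_map_eq_self' {K : Subgroup G} (hNK : N ≤ K) :
    Subgroup.comap π (Subgroup.map π K) = K := by
  rw [Subgroup.comap_map_eq, QuotientGroup.ker_mk', sup_eq_left.mpr hNK]

lemma map_comap_eq_self' (K' : Subgroup (G ⧸ N)) :
    Subgroup.map π (Subgroup.comap π K') = K' :=
  Subgroup.map_comap_eq_self_of_surjective (QuotientGroup.mk'_surjective N) K'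

lemma ker_le_comap' (K' : Subgroup (G ⧸ N)) : N ≤ Subgroup.comap π K' := by
  intro x hx
  have : π x = 1 := by
    rw [← MonoidHom.mem_ker, QuotientGroup.ker_mk']
    exact hx
  rw [Subgroup.mem_comap, this]
  exact K'.one_mem

lemma isCoatom_map {M : Subgroup G} (hNM : N ≤ M) (h : IsCoatom M) :
    IsCoatom (Subgroup.map π M) := by
  constructor
  · intro htop
    rw [map_eq_top_iff', sup_eq_left.mpr hNM] at htop
    exact h.1 htop
  · intro B' hB'
    have hMB : M < Subgroup.comap π B' := by
      rw [lt_iff_le_and_ne]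
      constructor
      · rw [← comap_map_eq_self' N hNM]
        exact Subgroup.comap_mono hB'.le
      · intro hMeq
        exact hB'.ne' (by rw [hMeq, map_comap_eq_self'])
    have := h.2 _ hMB
    rw [← map_comap_eq_self' N B', this]
    exact Subgroup.map_top_of_surjective _ (QuotientGroup.mk'_surjective N)

lemma isCoatom_comap {M' : Subgroup (G ⧸ N)} (h : IsCoatom M') :
    IsCoatom (Subgroup.comap π M') := by
  constructor
  · intro htop
    apply h.1
    rw [← map_comap_eq_self' N M', htop]
    exact Subgroup.map_top_of_surjective _ (QuotientGroup.mk'_surjective N)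
  · intro B hB
    have hNB : N ≤ B := le_trans (ker_le_comap' N M') hB.le
    have hM'B : M' < Subgroup.map π B := by
      rw [lt_iff_le_and_ne]
      constructor
      · rw [← map_comap_eq_self' N M']
        exact Subgroup.map_mono hB.le
      · intro hMeq
        apply hB.ne'
        rw [← comap_map_eq_self' N hNB, ← hMeq]
    have := h.2 _ hM'B
    rw [map_eq_top_iff', sup_eq_left.mpr hNB] at this
    exact this

lemma isFrattiniFactor_map_iff {Y X : Subgroup G} (hNY : N ≤ Y) :
    IsFrattiniFactor (Subgroup.map π Y) (Subgroup.map π X) ↔ IsFrattiniFactor Y X := by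
  constructor
  · intro hF M hM hYM
    have hNM : N ≤ M := le_trans hNY hYM
    have h1 : Subgroup.map π Y ≤ Subgroup.map π M := Subgroup.map_mono hYM
    have h2 := hF (Subgroup.map π M) (isCoatom_map N hNM hM) h1
    calc X ≤ Subgroup.comap π (Subgroup.map π X) := Subgroup.le_comap_map _ X
      _ ≤ Subgroup.comap π (Subgroup.map π M) := Subgroup.comap_mono h2
      _ = M := comap_map_eq_self' N hNM
  · intro hF M' hM' hYM'
    have h1 : Y ≤ Subgroup.comap π M' := by
      calc Y ≤ Subgroup.comap π (Subgroup.map π Y) := Subgroup.le_comap_map _ Y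
        _ ≤ Subgroup.comap π M' := Subgroup.comap_mono hYM'
    have h2 := hF _ (isCoatom_comap N hM') h1
    calc Subgroup.map π X ≤ Subgroup.map π (Subgroup.comap π M') := Subgroup.map_mono h2
      _ = M' := map_comap_eq_self' N M'

end Correspondence

section Main
universe u

lemma main_aux : ∀ (n : ℕ) (G : Type u) [Group G] [Finite G] [Group.IsSolvable G]
    (c : Fin (n + 1) → Subgroup G), Monotone c → c 0 = ⊥ → c (Fin.last n) = ⊤ →
    (∀ i, (c i).Normal) →
    (∀ i : Fin n, c i.castSucc < c i.succ ∧
      ∀ N : Subgroup G, N.Normal → c i.castSucc ≤ N → N ≤ c i.succ →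
        N = c i.castSucc ∨ N = c i.succ) →
    mGen G = Nat.card {i : Fin n // ¬ IsFrattiniFactor (c i.castSucc) (c i.succ)} := by
  intro n
  induction n with
  | zero =>
    intro G _ _ _ c hmono h0 hlast hnorm hchief
    have hbt : (⊥ : Subgroup G) = ⊤ := by rw [← h0, ← hlast]; rfl
    have : Subsingleton G := by
      constructor
      intro a b
      have ha : a ∈ (⊥ : Subgroup G) := hbt ▸ Subgroup.mem_top a
      have hb : b ∈ (⊥ : Subgroup G) := hbt ▸ Subgroup.mem_top b
      rw [Subgroup.mem_bot.mp ha, Subgroup.mem_bot.mp hb]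
    rw [mGen_eq_zero_of_subsingleton G]
    exact (Nat.card_of_isEmpty).symm
  | succ n ih =>
    intro G _ _ _ c hmono h0 hlast hnorm hchief
    classical
    set N := c ((0 : Fin (n + 1)).succ) with hN
    have : (c ((0 : Fin (n + 1)).succ)).Normal := hnorm _
    have hNnormal : N.Normal := this
    set φ := QuotientGroup.mk' N with hφ
    have hNle : ∀ j : Fin (n + 1), N ≤ c j.succ := fun j =>
      hmono (Fin.succ_le_succ_iff.mpr (Fin.zero_le j))
    -- the quotient series
    set c' : Fin (n + 1) → Subgroup (G ⧸ N) := fun j => Subgroup.map φ (c j.succ) with hc'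
    have hmono' : Monotone c' := fun a b hab =>
      Subgroup.map_mono (hmono (Fin.succ_le_succ_iff.mpr hab))
    have h0' : c' 0 = ⊥ := by
      rw [hc']
      exact map_mk'_eq_bot N
    have hlast' : c' (Fin.last n) = ⊤ := by
      rw [hc']
      simp only [Fin.succ_last, hlast]
      exact Subgroup.map_top_of_surjective _ (QuotientGroup.mk'_surjective N)
    have hnorm' : ∀ i, (c' i).Normal := fun i =>
      Subgroup.Normal.map (hnorm _) φ (QuotientGroup.mk'_surjective N)
    have hchief' : ∀ i : Fin n, c' i.castSucc < c' i.succ ∧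
        ∀ N' : Subgroup (G ⧸ N), N'.Normal → c' i.castSucc ≤ N' → N' ≤ c' i.succ →
          N' = c' i.castSucc ∨ N' = c' i.succ := by
      intro i
      have hYX := hchief i.succ
      have hidx : i.castSucc.succ = i.succ.castSucc := Fin.succ_castSucc i
      have hNY : N ≤ c i.succ.castSucc := by rw [← hidx]; exact hNle i.castSucc
      have hNX : N ≤ c i.succ.succ := hNle i.succ
      constructor
      · rw [hc', lt_iff_le_and_ne]
        simp only
        rw [hidx]
        refine ⟨Subgroup.map_mono hYX.1.le, fun heq => hYX.1.ne ?_⟩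
        have := congrArg (Subgroup.comap φ) heq
        rwa [comap_map_eq_self' N hNY, comap_map_eq_self' N hNX] at this
      · intro N' hN' h1 h2
        rw [hc'] at h1 h2 ⊢
        simp only at h1 h2 ⊢
        rw [hidx] at h1 ⊢
        set K := Subgroup.comap φ N' with hK
        have hKnormal : K.Normal := Subgroup.Normal.comap hN' φ
        have hK1 : c i.succ.castSucc ≤ K := by
          rw [hK, ← comap_map_eq_self' N hNY]
          exact Subgroup.comap_mono h1
        have hK2 : K ≤ c i.succ.succ := by
          rw [hK, ← comap_map_eq_self' N hNX]
          exact Subgroup.comap_mono h2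
        rcases hYX.2 K hKnormal hK1 hK2 with h | h
        · left; rw [← map_comap_eq_self' N N', ← hK, h]
        · right; rw [← map_comap_eq_self' N N', ← hK, h]
    have hIH := ih (G ⧸ N) c' hmono' h0' hlast' hnorm' hchief'
    -- Frattini factor correspondence
    have hFiff : ∀ i : Fin n,
        IsFrattiniFactor (c' i.castSucc) (c' i.succ) ↔
        IsFrattiniFactor (c i.succ.castSucc) (c i.succ.succ) := by
      intro i
      have hidx : i.castSucc.succ = i.succ.castSucc := Fin.succ_castSucc i
      have hNY : N ≤ c i.succ.castSucc := by rw [← hidx]; exact hNle i.castSucc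
      rw [hc']
      simp only
      rw [hidx]
      exact isFrattiniFactor_map_iff N hNY
    -- counting
    have hcount := card_subtype_fin_succ
      (fun i : Fin (n + 1) => ¬ IsFrattiniFactor (c i.castSucc) (c i.succ))
    have hcount2 : Nat.card {i : Fin n // ¬ IsFrattiniFactor (c i.succ.castSucc) (c i.succ.succ)}
        = Nat.card {i : Fin n // ¬ IsFrattiniFactor (c' i.castSucc) (c' i.succ)} :=
      Nat.card_congr (Equiv.subtypeEquivRight fun i => not_congr (hFiff i).symm)
    -- minimality data for N
    have hminN : ∀ K : Subgroup G, K.Normal → K ≤ N → K = ⊥ ∨ K = N := by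
      intro K hKn hKN
      have := (hchief 0).2 K hKn (by rw [Fin.castSucc_zero, h0]; exact bot_le) hKN
      rcases this with h | h
      · left; rw [h, Fin.castSucc_zero, h0]
      · right; exact h
    have hNbot : N ≠ ⊥ := by
      have := (hchief 0).1
      rw [Fin.castSucc_zero, h0] at this
      exact this.ne'
    by_cases hF0 : IsFrattiniFactor (c (0 : Fin (n+1)).castSucc) (c (0 : Fin (n+1)).succ)
    · -- Frattini case
      have hNfrat : N ≤ frattini G := by
        rw [le_frattini_iff]
        intro M hM
        exact hF0 M hM (by rw [Fin.castSucc_zero, h0]; exact bot_le)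
      rw [mGen_quotient_frattini N hNfrat, hIH, hcount, hcount2, if_neg (not_not_intro hF0)]
      exact (Nat.zero_add _).symm
    · -- non-Frattini case
      obtain ⟨M, hM, -, hNM⟩ : ∃ M : Subgroup G, IsCoatom M ∧
          c (0 : Fin (n+1)).castSucc ≤ M ∧ ¬ N ≤ M := by
        by_contra h
        push_neg at h
        exact hF0 fun M hM hle => h M hM hle
      have hab := abelian_of_min_normal N hNbot hminN
      have heq : mGen G = mGen (G ⧸ N) + 1 :=
        le_antisymm (mGen_le_quotient_succ N hminN hab)
          (quotient_succ_le_mGen N hminN hab hNbot hM hNM)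
      rw [heq, hIH, hcount, hcount2, if_pos hF0]
      exact Nat.add_comm _ 1

end Main

theorem m_eq_nonFrattini_chief_factors_of_solvable
    (G : Type*) [Group G] [Finite G] [Group.IsSolvable G]
    (n : ℕ) (c : Fin (n + 1) → Subgroup G)
    (hmono : Monotone c) (h0 : c 0 = ⊥) (hlast : c (Fin.last n) = ⊤)
    (hnorm : ∀ i, (c i).Normal)
    (hchief : ∀ i : Fin n, c i.castSucc < c i.succ ∧
      ∀ N : Subgroup G, N.Normal → c i.castSucc ≤ N → N ≤ c i.succ →
        N = c i.castSucc ∨ N = c i.succ) :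
    mGen G = Nat.card {i : Fin n // ¬ IsFrattiniFactor (c i.castSucc) (c i.succ)} :=
  main_aux n G c hmono h0 hlast hnorm hchief
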